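/- Let θ be real with 1 ≤ θ ≤ 2.13 and let r = 5. If γ is the unique root in (0, 0.56) of q(x) = 1 − (r − θ)x + (r − 2θ)x² + θx³, then θ ≤ 1/(1 − γ), equivalently 1 − 1/θ ≤ γ. -/
import Mathlib

/-- The cubic `q(x) = 1 - (r - θ)x + (r - 2θ)x² + θx³`. -/
def q (r θ x : ℝ) : ℝ :=
  1 - (r - θ) * x + (r - 2 * θ) * x ^ 2 + θ * x ^ 3

/-- Let `1 ≤ θ ≤ 2.13` and `r = 5`. If `γ` is the root of `q` in `(0, 0.56)`,
then `θ ≤ 1/(1 - γ)`, equivalently `1 - 1/θ ≤ γ`. -/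
theorem theta_le (θ γ : ℝ) (hθ1 : 1 ≤ θ) (hθ2 : θ ≤ 2.13)
    (hγ : 0 < γ ∧ γ < 0.56 ∧ q 5 θ γ = 0) :
    θ ≤ 1 / (1 - γ) ∧ 1 - 1 / θ ≤ γ := by
  obtain ⟨h0, h1, hq⟩ := hγ
  simp only [q] at hq
  have hθ0 : (0:ℝ) < θ := by linarith
  have h1γ : (0:ℝ) < 1 - γ := by linarith
  set u : ℝ := θ - 1 - θ * γ with hu
  have key : u ≤ 0 := by
    by_contra hpos
    push_neg at hpos
    have hub : u < θ - 1 := by nlinarith [mul_pos hθ0 h0]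
    have hid : θ ^ 3 * (1 - (5 - θ) * γ + (5 - 2 * θ) * γ ^ 2 + θ * γ ^ 3)
        = θ * ((θ - 2) ^ 2 + (7 - 3 * θ) * u + u ^ 2 * (θ + 2 - u)) := by
      rw [hu]; ring
    rw [hq, mul_zero] at hid
    have h7 : (0:ℝ) < 7 - 3 * θ := by linarith
    nlinarith [sq_nonneg (θ - 2), mul_pos h7 hpos, mul_pos (mul_pos hpos hpos) (by linarith : (0:ℝ) < θ + 2 - u), mul_pos hpos hpos]
  have key2 : θ * (1 - γ) ≤ 1 := by rw [hu] at key; nlinarith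
  constructor
  · rw [le_div_iff₀ h1γ]; linarith
  · have h3 : 1 - γ ≤ 1 / θ := by
      rw [le_div_iff₀ hθ0]; nlinarith
    linarith
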